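/- Let M be a nonzero comultiplication R-module such that the large sum graph Ǵ(M) contains a cycle. Then the girth of Ǵ(M) is 3. -/

import Mathlib

/-- `M` is a comultiplication `R`-module: every submodule is of the form `(0 :_M I)`. -/
def IsComultiplication (R M : Type*) [CommRing R] [AddCommGroup M] [Module R M] : Prop :=
  ∀ N : Submodule R M, ∃ I : Ideal R, ∀ m : M, m ∈ N ↔ ∀ r ∈ I, r • m = 0

/-- A submodule is large (essential) if it meets every nonzero submodule nontrivially. -/
def IsLarge {R M : Type*} [CommRing R] [AddCommGroup M] [Module R M]
    (N : Submodule R M) : Prop :=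
  ∀ L : Submodule R M, L ≠ ⊥ → N ⊓ L ≠ ⊥

/-- The vertices of the large sum graph: nonzero non-large submodules. -/
abbrev LargeSumVtx (R M : Type*) [CommRing R] [AddCommGroup M] [Module R M] :=
  {N : Submodule R M // N ≠ ⊥ ∧ ¬ IsLarge N}

/-- The large sum graph: distinct nonzero non-large submodules `N, K` are adjacent
iff `N + K` is not large. -/
def largeSumGraph (R M : Type*) [CommRing R] [AddCommGroup M] [Module R M] :
    SimpleGraph (LargeSumVtx R M) where
  Adj N K := N ≠ K ∧ ¬ IsLarge (N.1 ⊔ K.1)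
  symm := ⟨fun a b ⟨h1, h2⟩ => ⟨h1.symm, by rwa [sup_comm]⟩⟩
  loopless := ⟨fun a h => h.1 rfl⟩

section helpers
variable {R M : Type*} [CommRing R] [AddCommGroup M] [Module R M]

lemma isLarge_mono {N K : Submodule R M} (h : N ≤ K) (hN : IsLarge N) : IsLarge K := by
  intro L hL hbot
  exact hN L hL (eq_bot_iff.2 ((inf_le_inf_right L h).trans hbot.le))

/-- adjacency when the sup is below some non-large submodule -/
lemma adj_of_sup_le {x y z : LargeSumVtx R M} (hxy : x ≠ y) (h : x.1 ⊔ y.1 ≤ z.1) :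
    (largeSumGraph R M).Adj x y :=
  ⟨hxy, fun hl => z.2.2 (isLarge_mono h hl)⟩

/-- From a path of length 3 with the right distinctness, get a triangle. -/
lemma triangle_of_path {v0 v1 v2 v3 : LargeSumVtx R M}
    (h01 : (largeSumGraph R M).Adj v0 v1) (h12 : (largeSumGraph R M).Adj v1 v2)
    (h23 : (largeSumGraph R M).Adj v2 v3) (h02 : v0 ≠ v2) (h13 : v1 ≠ v3) :
    ∃ a b c : LargeSumVtx R M, (largeSumGraph R M).Adj a b ∧ (largeSumGraph R M).Adj b c ∧
      (largeSumGraph R M).Adj c a := by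
  classical
  -- if some adjacent pair is incomparable, the sup gives a triangle
  have key : ∀ x y : LargeSumVtx R M, (largeSumGraph R M).Adj x y →
      (x.1 ≤ y.1 ∨ y.1 ≤ x.1) ∨
      ∃ a b c : LargeSumVtx R M, (largeSumGraph R M).Adj a b ∧ (largeSumGraph R M).Adj b c ∧
        (largeSumGraph R M).Adj c a := by
    intro x y hxy
    by_cases hle : x.1 ≤ y.1 ∨ y.1 ≤ x.1
    · exact Or.inl hle
    push_neg at hle
    right
    have hsne : x.1 ⊔ y.1 ≠ ⊥ := fun hb => x.2.1 (eq_bot_iff.2 (le_sup_left.trans hb.le))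
    refine ⟨x, y, ⟨x.1 ⊔ y.1, hsne, hxy.2⟩, hxy, ?_, ?_⟩
    · refine adj_of_sup_le (z := ⟨x.1 ⊔ y.1, hsne, hxy.2⟩) (fun h => hle.1 ?_)
        (sup_le le_sup_right le_rfl)
      have : y.1 = x.1 ⊔ y.1 := congrArg Subtype.val h
      exact le_sup_left.trans this.symm.le
    · refine adj_of_sup_le (z := ⟨x.1 ⊔ y.1, hsne, hxy.2⟩) (fun h => hle.2 ?_)
        (sup_le le_rfl le_sup_left)
      have : x.1 ⊔ y.1 = x.1 := congrArg Subtype.val h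
      exact le_sup_right.trans this.le
  rcases key _ _ h12 with h2 | ht
  · rcases h2 with h2 | h2
    · -- v1 ≤ v2 : look at (v2, v3)
      rcases key _ _ h23 with h3 | ht
      · rcases h3 with h3 | h3
        · -- v1 ≤ v2 ≤ v3
          exact ⟨v1, v2, v3, h12, h23, adj_of_sup_le (Ne.symm h13) (sup_le le_rfl (h2.trans h3))⟩
        · -- peak at v2
          exact ⟨v1, v2, v3, h12, h23, adj_of_sup_le (Ne.symm h13) (sup_le h3 h2)⟩
      · exact ht
    · -- v2 ≤ v1 : look at (v0, v1)
      rcases key _ _ h01 with h1 | ht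
      · rcases h1 with h1 | h1
        · -- peak at v1
          exact ⟨v0, v1, v2, h01, h12, adj_of_sup_le (Ne.symm h02) (sup_le h2 h1)⟩
        · -- v2 ≤ v1 ≤ v0
          exact ⟨v0, v1, v2, h01, h12, adj_of_sup_le (Ne.symm h02) (sup_le (h2.trans h1) le_rfl)⟩
      · exact ht
  · exact ht

end helpers

open SimpleGraph in
lemma girth_le_three_of_triangle {V : Type*} {G : SimpleGraph V} {a b c : V}
    (hab : G.Adj a b) (hbc : G.Adj b c) (hca : G.Adj c a) : G.egirth ≤ 3 := by
  have h1 : a ≠ b := hab.ne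
  have h2 : b ≠ c := hbc.ne
  have h3 : a ≠ c := fun h => hca.ne h.symm
  have ht : (Walk.cons hab (.cons hbc (.cons hca .nil))).IsCycle := by
    rw [Walk.cons_isCycle_iff]
    constructor
    · rw [Walk.cons_isPath_iff, Walk.cons_isPath_iff]
      refine ⟨⟨Walk.IsPath.nil, by simp [hca.ne]⟩, by simp [hbc.ne, hab.ne.symm, h3]⟩
    · simp only [Walk.edges_cons, Walk.edges_nil, List.mem_cons, Sym2.eq_iff]
      push_neg
      tauto
  calc G.egirth ≤ ((Walk.cons hab (.cons hbc (.cons hca .nil))).length : ℕ∞) :=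
        iInf_le_of_le a (iInf_le_of_le _ (iInf_le _ ht))
    _ = 3 := by simp


/-- If the large sum graph of a nonzero comultiplication module contains a cycle, its girth
is `3`. -/
theorem stmt9 {R M : Type*} [CommRing R] [AddCommGroup M] [Module R M]
    [Nontrivial M] (hc : IsComultiplication R M)
    (h : ¬ (largeSumGraph R M).IsAcyclic) :
    (largeSumGraph R M).girth = 3 := by
  obtain ⟨a, w, hw, -⟩ := SimpleGraph.exists_girth_eq_length.mpr h
  -- destructure the first three edges of the cycle
  rcases w with - | ⟨h01, w⟩
  · exact absurd hw (SimpleGraph.Walk.IsCycle.not_of_nil)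
  · rcases w with - | ⟨h12, w⟩
    · exact absurd hw.three_le_length (by simp)
    rcases w with - | ⟨h23, q⟩
    · exact absurd hw.three_le_length (by simp)
    -- now hw : (cons h01 (cons h12 (cons h23 q))).IsCycle
    have hnodup := hw.support_nodup
    simp only [SimpleGraph.Walk.support_cons, List.tail_cons, List.nodup_cons] at hnodup
    rename_i v1 v2 v3
    have hv3 : v3 ∈ q.support := q.start_mem_support
    have ha : a ∈ q.support := q.end_mem_support
    have h13 : v1 ≠ v3 := fun h => hnodup.1 (by simp [h, hv3])
    have h02 : a ≠ v2 := fun h => hnodup.2.1 (by simp [← h, ha])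
    obtain ⟨x, y, z, hxy, hyz, hzx⟩ := triangle_of_path h01 h12 h23 h02 h13
    have hle := girth_le_three_of_triangle hxy hyz hzx
    have hge : 3 ≤ (largeSumGraph R M).egirth := SimpleGraph.three_le_egirth
    have : (largeSumGraph R M).egirth = 3 := le_antisymm hle hge
    simp [SimpleGraph.girth, this]
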